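/- Let U be an open neighborhood of a point x₀ in ℂ^n and let f, g : U → ℂ be holomorphic. If the complex Fréchet derivative at x₀ of the map (f, g) : U → ℂ² is surjective and f(x₀)·g(x₀) ≠ 0, then the Fréchet derivative over ℝ at x₀ of the map h(z) = f(z)·conj(g(z)) (viewed as a map between real vector spaces ℂ^n → ℂ) is surjective. Equivalently, Sing(f·conj(g)) ⊆ Sing(f, g) ∪ {f·g = 0}. -/

import Mathlib

open Function

/-- If `(f,g)` is a submersion at `x₀` and `f(x₀)·g(x₀) ≠ 0`, then `f·conj g` is a
(real) submersion at `x₀`; i.e. `Sing (f·conj g) ⊆ Sing (f,g) ∪ {fg = 0}`. -/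
theorem stmt_8 (n : ℕ)
    (U : Set (EuclideanSpace ℂ (Fin n))) (hU : IsOpen U)
    (x₀ : EuclideanSpace ℂ (Fin n)) (hx₀ : x₀ ∈ U)
    (f g : EuclideanSpace ℂ (Fin n) → ℂ)
    (hf : AnalyticOnNhd ℂ f U) (hg : AnalyticOnNhd ℂ g U)
    (hsurj : Function.Surjective (fderiv ℂ (fun x => (f x, g x)) x₀))
    (hne : f x₀ * g x₀ ≠ 0) :
    Function.Surjective (fderiv ℝ (fun x => f x * (starRingEnd ℂ) (g x)) x₀) := by
  have hdf : DifferentiableAt ℂ f x₀ := (hf x₀ hx₀).differentiableAt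
  have hdg : DifferentiableAt ℂ g x₀ := (hg x₀ hx₀).differentiableAt
  -- get v with Df v = 1, Dg v = 0
  obtain ⟨v, hv⟩ := hsurj (1, 0)
  have hpair : HasFDerivAt (fun x => (f x, g x))
      ((fderiv ℂ f x₀).prod (fderiv ℂ g x₀)) x₀ :=
    hdf.hasFDerivAt.prodMk hdg.hasFDerivAt
  rw [hpair.fderiv] at hv
  have hfv : fderiv ℂ f x₀ v = 1 := congrArg Prod.fst hv
  have hgv : fderiv ℂ g x₀ v = 0 := congrArg Prod.snd hv
  -- real derivative of h
  have hcg : HasFDerivAt (fun x => (starRingEnd ℂ) (g x))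
      (Complex.conjCLE.toContinuousLinearMap.comp
        ((fderiv ℂ g x₀).restrictScalars ℝ)) x₀ :=
    Complex.conjCLE.hasFDerivAt.comp x₀ (hdg.hasFDerivAt.restrictScalars ℝ)
  have hh := ((hdf.hasFDerivAt.restrictScalars ℝ).mul hcg)
  rw [show (fun x => f x * (starRingEnd ℂ) (g x)) = (f * fun x => (starRingEnd ℂ) (g x)) from rfl,
    hh.fderiv]
  intro z
  refine ⟨(z / (starRingEnd ℂ) (g x₀)) • v, ?_⟩
  have hg0 : (starRingEnd ℂ) (g x₀) ≠ 0 := by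
    simp only [ne_eq, map_eq_zero]
    exact fun h => hne (by rw [h, mul_zero])
  simp only [ContinuousLinearMap.add_apply, ContinuousLinearMap.smul_apply,
    ContinuousLinearMap.comp_apply, ContinuousLinearMap.coe_restrictScalars',
    map_smul, hfv, hgv, map_zero, smul_zero, add_zero,
    ContinuousLinearEquiv.coe_coe, smul_eq_mul, mul_one]
  field_simp
  simp
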